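/- Pollard's virial theorem, converse direction: let q(t) be a solution of Newton's N-body equations defined for all t ∈ ℝ, and suppose the time averages ⟨K⟩ = lim_{T→∞} (1/(2T))∫_{−T}^{T} K(t) dt and ⟨U⟩ = lim_{T→∞} (1/(2T))∫_{−T}^{T} U(q(t)) dt both exist as finite limits and satisfy the virial equation 2⟨K⟩ − ⟨U⟩ = 0. Then I(t)/t² → 0 as t → +∞ and as t → −∞. -/

import Mathlib

open Finset Filter MeasureTheory
open scoped RealInnerProductSpace

noncomputable section

/-- Configuration space of `N` bodies in `ℝ³`. -/
abbrev Config (N : ℕ) := Fin N → EuclideanSpace ℝ (Fin 3)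

/-- A configuration is collision-free if all bodies occupy distinct positions. -/
def CollisionFree {N : ℕ} (q : Config N) : Prop :=
  ∀ a b : Fin N, a ≠ b → q a ≠ q b

/-- The Newtonian potential `U(q) = G ∑_{a<b} m_a m_b / |q_a - q_b|`. -/
def potU {N : ℕ} (G : ℝ) (m : Fin N → ℝ) (q : Config N) : ℝ :=
  G * ∑ a : Fin N, ∑ b : Fin N, if a < b then m a * m b / ‖q a - q b‖ else 0

/-- Kinetic energy `K = (1/2) ∑_a m_a |v_a|²`. -/
def kinE {N : ℕ} (m : Fin N → ℝ) (v : Config N) : ℝ :=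
  (1 / 2) * ∑ a : Fin N, m a * ‖v a‖ ^ 2

/-- Moment of inertia `I = ∑_a m_a |q_a|²`. -/
def momI {N : ℕ} (m : Fin N → ℝ) (q : Config N) : ℝ :=
  ∑ a : Fin N, m a * ‖q a‖ ^ 2

/-- `q, v : ℝ → Config N` is a solution of Newton's N-body equations on `J`:
at each time in `J` the configuration is collision-free, `v` is the derivative
of `q`, and the acceleration satisfies
`m_a q̈_a = G ∑_{b ≠ a} m_a m_b (q_b - q_a)/|q_b - q_a|³`. -/
def IsSolutionOn {N : ℕ} (G : ℝ) (m : Fin N → ℝ) (J : Set ℝ)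
    (q v : ℝ → Config N) : Prop :=
  ∀ t ∈ J,
    CollisionFree (q t) ∧
    (∀ a, HasDerivAt (fun s => q s a) (v t a) t) ∧
    (∀ a, ∃ acc : EuclideanSpace ℝ (Fin 3),
      HasDerivAt (fun s => v s a) acc t ∧
      m a • acc = ∑ b ∈ univ.filter (fun b => b ≠ a),
        (G * m a * m b / ‖q t b - q t a‖ ^ 3) • (q t b - q t a))

lemma force_inner_sum {N : ℕ} (G : ℝ) (m : Fin N → ℝ) (q : Config N)
    (hq : CollisionFree q) :
    ∑ a : Fin N, ⟪q a, ∑ b ∈ univ.filter (fun b => b ≠ a),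
        (G * m a * m b / ‖q b - q a‖ ^ 3) • (q b - q a)⟫ = - potU G m q := by
  set g : Fin N → Fin N → ℝ :=
    fun a b => (G * m a * m b / ‖q b - q a‖ ^ 3) * ⟪q a, q b - q a⟫ with hg
  set h : Fin N → Fin N → ℝ := fun a b => G * (m a * m b / ‖q a - q b‖) with hh
  have hsym : ∀ a b, h a b = h b a := by
    intro a b; simp only [hh]; rw [norm_sub_rev]; ring
  have hstep : ∀ a b : Fin N, b ≠ a → g a b + g b a = - h a b := by
    intro a b hba
    have hne : q b - q a ≠ 0 := sub_ne_zero.2 (hq b a hba)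
    have hnorm : (0:ℝ) < ‖q b - q a‖ := norm_pos_iff.2 hne
    have hrev : ‖q a - q b‖ = ‖q b - q a‖ := norm_sub_rev _ _
    have hinner : ⟪q a, q b - q a⟫ + ⟪q b, q a - q b⟫ = - ‖q b - q a‖ ^ 2 := by
      rw [← real_inner_self_eq_norm_sq]
      simp only [inner_sub_left, inner_sub_right, real_inner_comm (q a) (q b)]
      ring
    show (G * m a * m b / ‖q b - q a‖ ^ 3) * ⟪q a, q b - q a⟫
        + (G * m b * m a / ‖q a - q b‖ ^ 3) * ⟪q b, q a - q b⟫
        = -(G * (m a * m b / ‖q a - q b‖))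
    rw [hrev]
    set r := ‖q b - q a‖
    set A : ℝ := ⟪q a, q b - q a⟫
    set B : ℝ := ⟪q b, q a - q b⟫
    have hB : B = - r ^ 2 - A := by linarith
    rw [hB]
    have hr : r ≠ 0 := ne_of_gt hnorm
    field_simp
    ring
  have hLHS : ∑ a : Fin N, ⟪q a, ∑ b ∈ univ.filter (fun b => b ≠ a),
        (G * m a * m b / ‖q b - q a‖ ^ 3) • (q b - q a)⟫
      = ∑ a : Fin N, ∑ b : Fin N, if b ≠ a then g a b else 0 := by
    refine Finset.sum_congr rfl fun a _ => ?_
    rw [inner_sum, Finset.sum_filter]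
    refine Finset.sum_congr rfl fun b _ => ?_
    split
    · exact real_inner_smul_right _ _ _
    · rfl
  rw [hLHS]
  set S := ∑ a : Fin N, ∑ b : Fin N, if b ≠ a then g a b else 0 with hS
  have hswap : S = ∑ a : Fin N, ∑ b : Fin N, if b ≠ a then g b a else 0 := by
    rw [hS, Finset.sum_comm]
    refine Finset.sum_congr rfl fun a _ => Finset.sum_congr rfl fun b _ => ?_
    simp only [ne_comm]
  have h2S : S + S = ∑ a : Fin N, ∑ b : Fin N, if b ≠ a then - h a b else 0 := by
    nth_rewrite 2 [hswap]
    rw [hS, ← Finset.sum_add_distrib]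
    refine Finset.sum_congr rfl fun a _ => ?_
    rw [← Finset.sum_add_distrib]
    refine Finset.sum_congr rfl fun b _ => ?_
    by_cases hba : b ≠ a
    · rw [if_pos hba, if_pos hba, if_pos hba]; exact hstep a b hba
    · rw [if_neg hba, if_neg hba, if_neg hba]; simp
  have hneg : (∑ a : Fin N, ∑ b : Fin N, if b ≠ a then - h a b else 0)
      = - ∑ a : Fin N, ∑ b : Fin N, if b ≠ a then h a b else 0 := by
    rw [← Finset.sum_neg_distrib]
    refine Finset.sum_congr rfl fun a _ => ?_
    rw [← Finset.sum_neg_distrib]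
    exact Finset.sum_congr rfl fun b _ => by split <;> simp
  have hsplit : ∑ a : Fin N, ∑ b : Fin N, (if b ≠ a then h a b else 0)
      = 2 * ∑ a : Fin N, ∑ b : Fin N, (if a < b then h a b else 0) := by
    have e1 : ∀ a b : Fin N, (if b ≠ a then h a b else 0)
        = (if a < b then h a b else 0) + (if b < a then h a b else 0) := by
      intro a b
      rcases lt_trichotomy a b with hlt | heq | hgt
      · simp [hlt, ne_of_gt hlt, not_lt.2 hlt.le]
      · simp [heq]
      · simp [hgt, (ne_of_lt hgt), not_lt.2 hgt.le]
    have e2 : ∑ a : Fin N, ∑ b : Fin N, (if b < a then h a b else 0)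
        = ∑ a : Fin N, ∑ b : Fin N, (if a < b then h a b else 0) := by
      rw [Finset.sum_comm]
      exact Finset.sum_congr rfl fun a _ => Finset.sum_congr rfl fun b _ => by
        by_cases hab : a < b <;> simp [hab, hsym a b]
    calc ∑ a : Fin N, ∑ b : Fin N, (if b ≠ a then h a b else 0)
        = ∑ a : Fin N, ∑ b : Fin N, ((if a < b then h a b else 0) + (if b < a then h a b else 0)) :=
          Finset.sum_congr rfl fun a _ => Finset.sum_congr rfl fun b _ => e1 a b
      _ = _ := by rw [two_mul]; simp [Finset.sum_add_distrib, e2]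
  have hpot : potU G m q = ∑ a : Fin N, ∑ b : Fin N, (if a < b then h a b else 0) := by
    rw [potU, Finset.mul_sum]
    refine Finset.sum_congr rfl fun a _ => ?_
    rw [Finset.mul_sum]
    refine Finset.sum_congr rfl fun b _ => ?_
    by_cases hab : a < b <;> simp [hab, hh]
  rw [hpot]
  have := h2S
  rw [hneg, hsplit] at this
  linarith

lemma cesaro_sq {h D : ℝ → ℝ} (hD : Continuous D)
    (hderiv : ∀ t, HasDerivAt h (D t) t)
    (hpos : ∀ t, 0 ≤ h t)
    (hlim : Tendsto (fun T => D T / (2 * T)) atTop (nhds 0)) :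
    Tendsto (fun T => h T / T ^ 2) atTop (nhds 0) := by
  rw [NormedAddCommGroup.tendsto_nhds_zero]
  intro ε hε
  have h8 : (0:ℝ) < ε / 8 := by linarith
  obtain ⟨T₀', hT₀'⟩ := (Metric.tendsto_atTop.1 hlim) (ε / 8) h8
  set T₀ : ℝ := max T₀' 1 with hT₀def
  have hT₀1 : (1:ℝ) ≤ T₀ := le_max_right _ _
  have hT₀0 : (0:ℝ) < T₀ := lt_of_lt_of_le one_pos hT₀1
  have hDbound : ∀ t, T₀ ≤ t → D t ≤ (ε / 4) * t := by
    intro t ht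
    have htpos : (0:ℝ) < t := lt_of_lt_of_le hT₀0 ht
    have := hT₀' t (le_trans (le_max_left _ _) ht)
    rw [Real.dist_eq, sub_zero, abs_div] at this
    have h2t : |2 * t| = 2 * t := abs_of_pos (by linarith)
    rw [h2t] at this
    have : |D t| < ε / 8 * (2 * t) := (div_lt_iff₀ (by linarith)).1 this
    calc D t ≤ |D t| := le_abs_self _
      _ ≤ ε / 8 * (2 * t) := this.le
      _ = ε / 4 * t := by ring
  set C := h T₀ with hC
  have hbound : ∀ T, T₀ ≤ T → h T ≤ C + ε / 8 * T ^ 2 := by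
    intro T hT
    have hftc : ∫ t in T₀..T, D t = h T - h T₀ :=
      intervalIntegral.integral_eq_sub_of_hasDerivAt
        (fun x _ => hderiv x) (hD.intervalIntegrable _ _)
    have hmono : ∫ t in T₀..T, D t ≤ ∫ t in T₀..T, (ε / 4) * t := by
      apply intervalIntegral.integral_mono_on hT
        (hD.intervalIntegrable _ _)
        ((continuous_const.mul continuous_id).intervalIntegrable _ _)
      intro t ht
      exact hDbound t ht.1
    have hval : ∫ t in T₀..T, (ε / 4) * t = ε / 4 * (T ^ 2 / 2 - T₀ ^ 2 / 2) := by
      rw [intervalIntegral.integral_const_mul, integral_id]; ring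
    have hle : h T - h T₀ ≤ ε / 4 * (T ^ 2 / 2 - T₀ ^ 2 / 2) := by
      rw [← hftc, ← hval]; exact hmono
    nlinarith [sq_nonneg T₀]
  have hCto : Tendsto (fun T : ℝ => C / T ^ 2) atTop (nhds 0) :=
    tendsto_const_nhds.div_atTop (tendsto_pow_atTop two_ne_zero)
  have hCev : ∀ᶠ T in atTop, C / T ^ 2 < ε / 2 :=
    hCto.eventually_lt_const (by linarith)
  filter_upwards [eventually_ge_atTop T₀, eventually_ge_atTop (1:ℝ), hCev]
    with T hT hT1 hCT
  have hT2 : (0:ℝ) < T ^ 2 := by positivity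
  have h1 : h T / T ^ 2 ≤ C / T ^ 2 + ε / 8 := by
    have h2 : h T / T ^ 2 ≤ (C + ε / 8 * T ^ 2) / T ^ 2 := by
      gcongr
      exact hbound T hT
    have h3 : (C + ε / 8 * T ^ 2) / T ^ 2 = C / T ^ 2 + ε / 8 := by rw [add_div, mul_div_assoc, div_self (ne_of_gt hT2), mul_one]
    linarith
  have h0 : 0 ≤ h T / T ^ 2 := div_nonneg (hpos T) hT2.le
  rw [Real.norm_eq_abs, abs_of_nonneg h0]
  calc h T / T ^ 2 ≤ C / T ^ 2 + ε / 8 := h1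
    _ < ε / 2 + ε / 8 := by linarith
    _ < ε := by linarith

/-- Pollard's virial theorem, converse direction: if the time
averages `⟨K⟩` and `⟨U⟩` of a solution defined for all time exist as finite
limits and satisfy the virial equation `2⟨K⟩ - ⟨U⟩ = 0`, then `I(t) = o(t²)` as
`t → ±∞`. -/
theorem pollard_virial_converse
    (N : ℕ) (hN : 2 ≤ N) (G : ℝ) (hG : 0 < G)
    (m : Fin N → ℝ) (hm : ∀ a, 0 < m a)
    (q v : ℝ → Config N)
    (hsol : IsSolutionOn G m Set.univ q v)
    (Kavg Uavg : ℝ)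
    (hK : Tendsto (fun T : ℝ => (1 / (2 * T)) * ∫ t in (-T)..T, kinE m (v t))
      atTop (nhds Kavg))
    (hU : Tendsto (fun T : ℝ => (1 / (2 * T)) * ∫ t in (-T)..T, potU G m (q t))
      atTop (nhds Uavg))
    (hvir : 2 * Kavg - Uavg = 0) :
    Tendsto (fun t : ℝ => momI m (q t) / t ^ 2) atTop (nhds 0) ∧
    Tendsto (fun t : ℝ => momI m (q t) / t ^ 2) atBot (nhds 0) := by
  classical
  have hcf : ∀ t, CollisionFree (q t) := fun t => (hsol t trivial).1
  have hqd : ∀ t a, HasDerivAt (fun s => q s a) (v t a) t :=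
    fun t => (hsol t trivial).2.1
  set F : ℝ → Fin N → EuclideanSpace ℝ (Fin 3) := fun t a =>
    ∑ b ∈ univ.filter (fun b => b ≠ a),
      (G * m a * m b / ‖q t b - q t a‖ ^ 3) • (q t b - q t a) with hF
  have hvd : ∀ t a, HasDerivAt (fun s => v s a) ((m a)⁻¹ • F t a) t := by
    intro t a
    obtain ⟨acc, hda, heq⟩ := (hsol t trivial).2.2 a
    have hacc : acc = (m a)⁻¹ • F t a := by
      rw [hF]; simp only [← heq, inv_smul_smul₀ (ne_of_gt (hm a))]
    rwa [hacc] at hda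
  set If : ℝ → ℝ := fun t => momI m (q t) with hIf
  set Jf : ℝ → ℝ := fun t => 2 * ∑ a : Fin N, m a * ⟪q t a, v t a⟫ with hJf
  -- derivative of I is J
  have hId : ∀ t, HasDerivAt If (Jf t) t := by
    intro t
    have heqI : If = fun s => ∑ a : Fin N, m a * ⟪q s a, q s a⟫ := by
      funext s
      simp only [hIf, momI, real_inner_self_eq_norm_sq]
    rw [heqI]
    have h1 : HasDerivAt (fun s => ∑ a : Fin N, m a * ⟪q s a, q s a⟫)
        (∑ a : Fin N, m a * (⟪q t a, v t a⟫ + ⟪v t a, q t a⟫)) t :=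
      HasDerivAt.fun_sum fun a _ => ((hqd t a).inner ℝ (hqd t a)).const_mul (m a)
    convert h1 using 1
    rw [hJf]
    beta_reduce
    rw [Finset.mul_sum]
    exact Finset.sum_congr rfl fun a _ => by
      rw [real_inner_comm (v t a) (q t a)]; ring
  -- derivative of J is 4K - 2U
  have hJd : ∀ t, HasDerivAt Jf (4 * kinE m (v t) - 2 * potU G m (q t)) t := by
    intro t
    have h1 : HasDerivAt (fun s => 2 * ∑ a : Fin N, m a * ⟪q s a, v s a⟫)
        (2 * ∑ a : Fin N, m a * (⟪q t a, (m a)⁻¹ • F t a⟫ + ⟪v t a, v t a⟫)) t :=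
      (HasDerivAt.fun_sum fun a _ =>
        ((hqd t a).inner ℝ (hvd t a)).const_mul (m a)).const_mul 2
    rw [hJf]
    convert h1 using 1
    have e1 : ∀ a : Fin N, m a * (⟪q t a, (m a)⁻¹ • F t a⟫ + ⟪v t a, v t a⟫)
        = ⟪q t a, F t a⟫ + m a * ‖v t a‖ ^ 2 := by
      intro a
      rw [real_inner_smul_right, real_inner_self_eq_norm_sq, mul_add,
        ← mul_assoc, mul_inv_cancel₀ (ne_of_gt (hm a)), one_mul]
    rw [Finset.sum_congr rfl fun a _ => e1 a, Finset.sum_add_distrib,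
      hF, force_inner_sum G m (q t) (hcf t), kinE]
    ring
  -- continuity
  have hqc : ∀ a, Continuous (fun t => q t a) := fun a =>
    continuous_iff_continuousAt.2 fun t => (hqd t a).continuousAt
  have hvc : ∀ a, Continuous (fun t => v t a) := fun a =>
    continuous_iff_continuousAt.2 fun t => (hvd t a).continuousAt
  have hKc : Continuous (fun t => kinE m (v t)) := by
    unfold kinE
    exact continuous_const.mul (continuous_finset_sum _ fun a _ =>
      continuous_const.mul (((hvc a).norm).pow 2))
  have hUc : Continuous (fun t => potU G m (q t)) := by
    unfold potU
    refine continuous_const.mul (continuous_finset_sum _ fun a _ =>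
      continuous_finset_sum _ fun b _ => ?_)
    by_cases hab : a < b
    · simp only [if_pos hab]
      exact continuous_const.div (((hqc a).sub (hqc b)).norm) fun t =>
        ne_of_gt (norm_pos_iff.2 (sub_ne_zero.2 (hcf t a b (ne_of_lt hab))))
    · simp only [if_neg hab]
      exact continuous_const
  have hfc : Continuous (fun t => 4 * kinE m (v t) - 2 * potU G m (q t)) :=
    (continuous_const.mul hKc).sub (continuous_const.mul hUc)
  have hJc : Continuous Jf :=
    continuous_iff_continuousAt.2 fun t => (hJd t).continuousAt
  -- FTC and the averaged virial limit
  have hftc : ∀ S T : ℝ, Jf T - Jf S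
      = ∫ t in S..T, (4 * kinE m (v t) - 2 * potU G m (q t)) := fun S T =>
    (intervalIntegral.integral_eq_sub_of_hasDerivAt (fun x _ => hJd x)
      (hfc.intervalIntegrable _ _)).symm
  have key : ∀ T : ℝ, (Jf T - Jf (-T)) / (2 * T)
      = 4 * ((1 / (2 * T)) * ∫ t in (-T)..T, kinE m (v t))
        - 2 * ((1 / (2 * T)) * ∫ t in (-T)..T, potU G m (q t)) := by
    intro T
    rw [hftc (-T) T,
      intervalIntegral.integral_sub
        ((hKc.intervalIntegrable _ _).const_mul 4)
        ((hUc.intervalIntegrable _ _).const_mul 2),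
      intervalIntegral.integral_const_mul, intervalIntegral.integral_const_mul]
    ring
  have hDlim : Tendsto (fun T => (Jf T - Jf (-T)) / (2 * T)) atTop (nhds 0) := by
    have h1 := (hK.const_mul (4:ℝ)).sub (hU.const_mul (2:ℝ))
    rw [show (4:ℝ) * Kavg - 2 * Uavg = 0 by linarith] at h1
    exact h1.congr fun T => (key T).symm
  -- the even part h(T) = I(T) + I(-T)
  set hf : ℝ → ℝ := fun T => If T + If (-T) with hhf
  set Df : ℝ → ℝ := fun T => Jf T - Jf (-T) with hDf
  have hhd : ∀ T, HasDerivAt hf (Df T) T := by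
    intro T
    have h2 : HasDerivAt (fun S : ℝ => If (-S)) (Jf (-T) * (-1)) T :=
      (hId (-T)).comp T (hasDerivAt_neg T)
    have h3 := (hId T).add h2
    rw [hhf, hDf]
    exact h3.congr_deriv (by beta_reduce; ring)
  have hDc : Continuous Df := hJc.sub (hJc.comp continuous_neg)
  have hInonneg : ∀ t, 0 ≤ If t := fun t =>
    Finset.sum_nonneg fun a _ => mul_nonneg (hm a).le (pow_two_nonneg _)
  have hhnonneg : ∀ t, 0 ≤ hf t := fun t =>
    add_nonneg (hInonneg t) (hInonneg (-t))
  have htop : Tendsto (fun T => hf T / T ^ 2) atTop (nhds 0) :=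
    cesaro_sq hDc hhd hhnonneg hDlim
  have hbotaux : Tendsto (fun T : ℝ => If (-T) / T ^ 2) atTop (nhds 0) := by
    refine squeeze_zero'
      (Eventually.of_forall fun t => div_nonneg (hInonneg (-t)) (sq_nonneg t)) ?_ htop
    filter_upwards [eventually_gt_atTop (0:ℝ)] with t ht
    have ht2 : (0:ℝ) < t ^ 2 := by positivity
    exact (div_le_div_iff_of_pos_right ht2).2 (le_add_of_nonneg_left (hInonneg t))
  constructor
  · refine squeeze_zero'
      (Eventually.of_forall fun t => div_nonneg (hInonneg t) (sq_nonneg t)) ?_ htop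
    filter_upwards [eventually_gt_atTop (0:ℝ)] with t ht
    have ht2 : (0:ℝ) < t ^ 2 := by positivity
    exact (div_le_div_iff_of_pos_right ht2).2 (le_add_of_nonneg_right (hInonneg (-t)))
  · rw [← Filter.map_neg_atTop, tendsto_map'_iff]
    have heq : ((fun t : ℝ => momI m (q t) / t ^ 2) ∘ Neg.neg)
        = fun T : ℝ => If (-T) / T ^ 2 := by
      funext T
      simp only [Function.comp_apply, hIf, neg_sq]
    rw [heq]
    exact hbotaux
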